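/- Let P_j^i[k] be the weighted sum over partitions of length i with first part j containing at least one part of each size j−1,...,j−k, with weight ∏ over critical indices u (λ_u = λ_{u-1}) of (a_{λ_u} + b_{u-1}). Then for k ≥ 0, i > k and j > k+1: P_j^i[k] − P_{j-1}^i[k] = (a_j + 1 − a_{j-k-1}) · P_j^i[k+1]. -/
import Mathlib


open Finset

attribute [local instance] Classical.propDecidable

noncomputable section

/-- Critical positions of a partition (as a function `Fin n → ℕ`): 0-indexed
positions `u ≥ 1` with `lam u = lam (u-1)`. -/
def crit {n : ℕ} (lam : Fin n → ℕ) : Finset (Fin n) :=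
  univ.filter fun u => 1 ≤ u.1 ∧
    lam u = lam ⟨u.1 - 1, Nat.lt_of_le_of_lt (Nat.sub_le u.1 1) u.2⟩

/-- The weight of a partition: the product over critical positions `u` of
`a (λ_u) + b_{u-1}` (paper's 1-indexed convention; here `u` is 0-indexed, so the
factor is `a (lam u) + b u`). -/
def wt {R : Type*} [CommRing R] (a b : ℕ → R) {n : ℕ} (lam : Fin n → ℕ) : R :=
  ∏ u ∈ crit lam, (a (lam u) + b u.1)

/-- The finset of partitions of length `i`, with first part `j`, positive parts, and
at least one part equal to `j - l` for each `l = 1, …, k`. -/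
def PartSet (j i k : ℕ) : Finset (Fin i → ℕ) :=
  (Fintype.piFinset fun _ : Fin i => Finset.Icc 1 j).filter fun lam =>
    (∀ u v : Fin i, u ≤ v → lam v ≤ lam u) ∧
    (∃ h : 0 < i, lam ⟨0, h⟩ = j) ∧
    (∀ l, 1 ≤ l → l ≤ k → ∃ u, lam u = j - l)

/-- `P_j^i[k]`: the weighted sum over `PartSet j i k`. -/
def P {R : Type*} [CommRing R] (a b : ℕ → R) (j i k : ℕ) : R :=
  ∑ lam ∈ PartSet j i k, wt a b lam

lemma mem_PartSet {j i k : ℕ} {lam : Fin i → ℕ} :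
    lam ∈ PartSet j i k ↔
      (∀ u, 1 ≤ lam u ∧ lam u ≤ j) ∧
      (∀ u v : Fin i, u ≤ v → lam v ≤ lam u) ∧
      (∃ h : 0 < i, lam ⟨0, h⟩ = j) ∧
      (∀ l, 1 ≤ l → l ≤ k → ∃ u, lam u = j - l) := by
  simp [PartSet, Fintype.mem_piFinset, Finset.mem_Icc, forall_and]

lemma cons_mem_iff (n j k : ℕ) (hk : 1 ≤ k) (hj : k + 1 ≤ j) (f : Fin (n+1) → ℕ) :
    Fin.cons j f ∈ PartSet j (n+2) k ↔
      f ∈ PartSet j (n+1) k ∨ f ∈ PartSet (j-1) (n+1) (k-1) := by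
  have hzero : ∀ (h : 0 < n + 2), (Fin.cons j f : Fin (n+2) → ℕ) ⟨0, h⟩ = j := fun _ => rfl
  constructor
  · intro hmem
    rw [mem_PartSet] at hmem
    obtain ⟨hB, hD, -, hE⟩ := hmem
    have hBf : ∀ u, 1 ≤ f u ∧ f u ≤ j := fun u => by
      simpa using hB u.succ
    have hDf : ∀ u v : Fin (n+1), u ≤ v → f v ≤ f u := by
      intro u v huv
      have := hD u.succ v.succ (by simpa using huv)
      simpa using this
    have hEf : ∀ l, 1 ≤ l → l ≤ k → ∃ v : Fin (n+1), f v = j - l := by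
      intro l hl1 hlk
      obtain ⟨u, hu⟩ := hE l hl1 hlk
      induction u using Fin.cases with
      | zero =>
        simp only [Fin.cons_zero] at hu
        omega
      | succ v => exact ⟨v, by simpa using hu⟩
    by_cases hf0 : f 0 = j
    · left
      rw [mem_PartSet]
      exact ⟨hBf, hDf, ⟨by omega, hf0⟩, hEf⟩
    · right
      have hf0' : f 0 = j - 1 := by
        obtain ⟨v, hv⟩ := hEf 1 le_rfl hk
        have h1 : f v ≤ f 0 := hDf 0 v (Fin.zero_le v)
        have h2 := (hBf 0).2
        omega
      rw [mem_PartSet]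
      refine ⟨fun u => ⟨(hBf u).1, ?_⟩, hDf, ⟨by omega, hf0'⟩, ?_⟩
      · have := hDf 0 u (Fin.zero_le u)
        omega
      · intro l hl1 hlk
        obtain ⟨v, hv⟩ := hEf (l+1) (by omega) (by omega)
        exact ⟨v, by omega⟩
  · intro hmem
    rcases hmem with hmem | hmem <;> rw [mem_PartSet] at hmem ⊢ <;>
      obtain ⟨hB, hD, ⟨hpos, hfirst⟩, hE⟩ := hmem
    · refine ⟨?_, ?_, ⟨by omega, hzero _⟩, ?_⟩
      · intro u
        induction u using Fin.cases with
        | zero => simp only [Fin.cons_zero]; omega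
        | succ v => simpa using hB v
      · intro u v huv
        induction u using Fin.cases with
        | zero =>
          induction v using Fin.cases with
          | zero => exact le_rfl
          | succ w =>
            simp only [Fin.cons_succ, Fin.cons_zero]
            exact (hB w).2
        | succ w =>
          induction v using Fin.cases with
          | zero => exact absurd huv (by simp [Fin.le_def])
          | succ w' =>
            have : w ≤ w' := Fin.succ_le_succ_iff.mp huv
            simpa using hD w w' this
      · intro l hl1 hlk
        obtain ⟨v, hv⟩ := hE l hl1 hlk
        exact ⟨v.succ, by simpa using hv⟩
    · have hf0 : f 0 = j - 1 := hfirst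
      refine ⟨?_, ?_, ⟨by omega, hzero _⟩, ?_⟩
      · intro u
        induction u using Fin.cases with
        | zero => simp only [Fin.cons_zero]; omega
        | succ v =>
          have := hB v
          simp only [Fin.cons_succ]
          omega
      · intro u v huv
        induction u using Fin.cases with
        | zero =>
          induction v using Fin.cases with
          | zero => exact le_rfl
          | succ w =>
            have := (hB w).2
            simp only [Fin.cons_succ, Fin.cons_zero]
            omega
        | succ w =>
          induction v using Fin.cases with
          | zero => exact absurd huv (by simp [Fin.le_def])
          | succ w' =>
            have : w ≤ w' := Fin.succ_le_succ_iff.mp huv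
            simpa using hD w w' this
      · intro l hl1 hlk
        rcases Nat.eq_or_lt_of_le hl1 with h1 | h1
        · exact ⟨Fin.succ 0, by simp [← h1, hf0]⟩
        · obtain ⟨v, hv⟩ := hE (l-1) (by omega) (by omega)
          exact ⟨v.succ, by simp only [Fin.cons_succ]; omega⟩
lemma first_eq {m n k : ℕ} {f : Fin (n+1) → ℕ} (h : f ∈ PartSet m (n+1) k) : f 0 = m := by
  rw [mem_PartSet] at h
  exact h.2.2.1.2

lemma cons_mem_iff0 (n j : ℕ) (hj : 1 ≤ j) (f : Fin (n+1) → ℕ) :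
    Fin.cons j f ∈ PartSet j (n+2) 0 ↔ (1 ≤ f 0 ∧ f 0 ≤ j ∧ f ∈ PartSet (f 0) (n+1) 0) := by
  have hzero : ∀ (h : 0 < n + 2), (Fin.cons j f : Fin (n+2) → ℕ) ⟨0, h⟩ = j := fun _ => rfl
  constructor
  · intro hmem
    rw [mem_PartSet] at hmem
    obtain ⟨hB, hD, -, -⟩ := hmem
    have hBf : ∀ u, 1 ≤ f u ∧ f u ≤ j := fun u => by simpa using hB u.succ
    have hDf : ∀ u v : Fin (n+1), u ≤ v → f v ≤ f u := by
      intro u v huv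
      have := hD u.succ v.succ (by simpa using huv)
      simpa using this
    refine ⟨(hBf 0).1, (hBf 0).2, ?_⟩
    rw [mem_PartSet]
    refine ⟨fun u => ⟨(hBf u).1, hDf 0 u (Fin.zero_le u)⟩, hDf, ⟨by omega, rfl⟩, ?_⟩
    intro l hl1 hl0
    omega
  · rintro ⟨h1, h2, hmem⟩
    rw [mem_PartSet] at hmem ⊢
    obtain ⟨hB, hD, -, -⟩ := hmem
    refine ⟨?_, ?_, ⟨by omega, hzero _⟩, ?_⟩
    · intro u
      induction u using Fin.cases with
      | zero => simp only [Fin.cons_zero]; omega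
      | succ v =>
        have := hB v
        simp only [Fin.cons_succ]
        omega
    · intro u v huv
      induction u using Fin.cases with
      | zero =>
        induction v using Fin.cases with
        | zero => exact le_rfl
        | succ w =>
          have := (hB w).2
          simp only [Fin.cons_succ, Fin.cons_zero]
          omega
      | succ w =>
        induction v using Fin.cases with
        | zero => exact absurd huv (by simp [Fin.le_def])
        | succ w' =>
          have : w ≤ w' := Fin.succ_le_succ_iff.mp huv
          simpa using hD w w' this
    · intro l hl1 hl0
      omega

lemma PartSet_disjoint {n k k' : ℕ} {m m' : ℕ} (h : m ≠ m') :
    Disjoint (PartSet m (n+1) k) (PartSet m' (n+1) k') := by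
  rw [Finset.disjoint_left]
  intro f hf hf'
  exact h ((first_eq hf).symm.trans (first_eq hf'))

lemma wt_cons' {R : Type*} [CommRing R] (a b : ℕ → R) {n : ℕ} (x : ℕ) (f : Fin (n+1) → ℕ) :
    wt a b (Fin.cons x f) =
      (if f 0 = x then a x + b 1 else 1) * wt a (fun m => b (m+1)) f := by
  unfold wt crit
  rw [Finset.prod_filter, Finset.prod_filter, Fin.prod_univ_succ, Fin.prod_univ_succ,
    Fin.prod_univ_succ]
  simp only [Fin.val_zero, Fin.val_succ, Fin.cons_zero, Fin.cons_succ, Nat.add_sub_cancel]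
  have hc : ∀ (m : ℕ) (h : m + 1 < n + 2),
      (Fin.cons x f : Fin (n+2) → ℕ) ⟨m + 1, h⟩ = f ⟨m, Nat.lt_of_succ_lt_succ h⟩ := fun m h =>
    @Fin.cons_succ (n+1) (fun _ => ℕ) x f ⟨m, Nat.lt_of_succ_lt_succ h⟩
  have h0 : ∀ (h : 0 < n + 2), (Fin.cons x f : Fin (n+2) → ℕ) ⟨0, h⟩ = x := fun h => rfl
  simp only [hc, h0, show ((1:ℕ) ≤ 0) = False from by simp, false_and, if_false, one_mul,
    le_add_iff_nonneg_left, zero_le, true_and]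
  by_cases hfx : f 0 = x <;> simp [hfx]

lemma tail_cons_eq {n : ℕ} (j : ℕ) (lam : Fin (n+2) → ℕ) (h : lam 0 = j) :
    Fin.cons j (fun v : Fin (n+1) => lam v.succ) = lam := by
  funext u
  induction u using Fin.cases with
  | zero => simpa using h.symm
  | succ v => simp

lemma P_rec {R : Type*} [CommRing R] (a b : ℕ → R) (n j k : ℕ) (hk : 1 ≤ k) (hj : k + 1 ≤ j) :
    P a b j (n+2) k = (a j + b 1) * P a (fun m => b (m+1)) j (n+1) k
      + P a (fun m => b (m+1)) (j-1) (n+1) (k-1) := by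
  classical
  have hdisj : Disjoint (PartSet j (n+1) k) (PartSet (j-1) (n+1) (k-1)) :=
    PartSet_disjoint (by omega)
  have key : P a b j (n+2) k =
      ∑ f ∈ PartSet j (n+1) k ∪ PartSet (j-1) (n+1) (k-1),
        (if f 0 = j then a j + b 1 else 1) * wt a (fun m => b (m+1)) f := by
    rw [P]
    refine Finset.sum_nbij' (fun lam => fun v : Fin (n+1) => lam v.succ)
      (fun f => Fin.cons j f) ?_ ?_ ?_ ?_ ?_
    · intro lam hlam
      have h0 : lam 0 = j := by
        rw [mem_PartSet] at hlam
        exact hlam.2.2.1.2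
      rw [Finset.mem_union, ← cons_mem_iff n j k hk hj]
      rw [tail_cons_eq j lam h0]
      exact hlam
    · intro f hf
      rw [Finset.mem_union, ← cons_mem_iff n j k hk hj] at hf
      exact hf
    · intro lam hlam
      have h0 : lam 0 = j := by
        rw [mem_PartSet] at hlam
        exact hlam.2.2.1.2
      exact tail_cons_eq j lam h0
    · intro f hf
      funext v
      simp
    · intro lam hlam
      have h0 : lam 0 = j := by
        rw [mem_PartSet] at hlam
        exact hlam.2.2.1.2
      conv_lhs => rw [← tail_cons_eq j lam h0]
      rw [wt_cons' a b j (fun v : Fin (n+1) => lam v.succ)]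
  rw [key, Finset.sum_union hdisj]
  congr 1
  · rw [P, Finset.mul_sum]
    refine Finset.sum_congr rfl fun f hf => ?_
    rw [if_pos (first_eq hf)]
  · rw [P]
    refine Finset.sum_congr rfl fun f hf => ?_
    rw [if_neg (by rw [first_eq hf]; omega), one_mul]

lemma P_rec0 {R : Type*} [CommRing R] (a b : ℕ → R) (n j : ℕ) (hj : 1 ≤ j) :
    P a b j (n+2) 0 = (a j + b 1) * P a (fun m => b (m+1)) j (n+1) 0
      + ∑ m ∈ Finset.Icc 1 (j-1), P a (fun m => b (m+1)) m (n+1) 0 := by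
  classical
  have hdisj : ∀ m ∈ Finset.Icc 1 j, ∀ m' ∈ Finset.Icc 1 j, m ≠ m' →
      Disjoint (PartSet m (n+1) 0) (PartSet m' (n+1) 0) := by
    intro m _ m' _ h
    exact PartSet_disjoint h
  have key : P a b j (n+2) 0 =
      ∑ f ∈ (Finset.Icc 1 j).biUnion (fun m => PartSet m (n+1) 0),
        (if f 0 = j then a j + b 1 else 1) * wt a (fun m => b (m+1)) f := by
    rw [P]
    refine Finset.sum_nbij' (fun lam => fun v : Fin (n+1) => lam v.succ)
      (fun f => Fin.cons j f) ?_ ?_ ?_ ?_ ?_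
    · intro lam hlam
      have h0 : lam 0 = j := by
        rw [mem_PartSet] at hlam
        exact hlam.2.2.1.2
      rw [← tail_cons_eq j lam h0] at hlam
      rw [cons_mem_iff0 n j hj] at hlam
      rw [Finset.mem_biUnion]
      exact ⟨_, Finset.mem_Icc.mpr ⟨hlam.1, hlam.2.1⟩, hlam.2.2⟩
    · intro f hf
      rw [Finset.mem_biUnion] at hf
      obtain ⟨m, hm, hf⟩ := hf
      rw [Finset.mem_Icc] at hm
      have h0 : f 0 = m := first_eq hf
      rw [cons_mem_iff0 n j hj]
      exact ⟨by omega, by omega, by rw [h0]; exact hf⟩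
    · intro lam hlam
      have h0 : lam 0 = j := by
        rw [mem_PartSet] at hlam
        exact hlam.2.2.1.2
      exact tail_cons_eq j lam h0
    · intro f hf
      funext v
      simp
    · intro lam hlam
      have h0 : lam 0 = j := by
        rw [mem_PartSet] at hlam
        exact hlam.2.2.1.2
      conv_lhs => rw [← tail_cons_eq j lam h0]
      rw [wt_cons' a b j (fun v : Fin (n+1) => lam v.succ)]
  rw [key, Finset.sum_biUnion (by intro m hm m' hm' h; exact hdisj m hm m' hm' h)]
  have inner : ∀ m ∈ Finset.Icc 1 j,
      (∑ f ∈ PartSet m (n+1) 0, (if f 0 = j then a j + b 1 else 1)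
        * wt a (fun m => b (m+1)) f)
      = (if m = j then a j + b 1 else 1) * P a (fun m => b (m+1)) m (n+1) 0 := by
    intro m _
    rw [P, Finset.mul_sum]
    refine Finset.sum_congr rfl fun f hf => ?_
    rw [first_eq hf]
  rw [Finset.sum_congr rfl inner]
  have hsplit : ∀ g : ℕ → R, ∑ m ∈ Finset.Icc 1 j, g m
      = (∑ m ∈ Finset.Icc 1 (j-1), g m) + g j := by
    intro g
    have e : j = (j - 1) + 1 := by omega
    conv_lhs => rw [e]
    rw [Finset.sum_Icc_succ_top (by omega)]
    rw [← e]
  rw [hsplit]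
  have hno : ∀ m ∈ Finset.Icc 1 (j-1),
      (if m = j then a j + b 1 else 1) * P a (fun m => b (m+1)) m (n+1) 0
        = P a (fun m => b (m+1)) m (n+1) 0 := by
    intro m hm
    rw [Finset.mem_Icc] at hm
    rw [if_neg (by omega), one_mul]
  rw [Finset.sum_congr rfl hno, if_pos rfl, add_comm]
lemma P_empty {R : Type*} [CommRing R] (a b : ℕ → R) (j k : ℕ) (hj : k + 2 ≤ j) :
    P a b j (k+1) (k+1) = 0 := by
  have hempty : PartSet j (k+1) (k+1) = ∅ := by
    rw [Finset.eq_empty_iff_forall_notMem]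
    intro lam hlam
    rw [mem_PartSet] at hlam
    obtain ⟨hB, hD, ⟨hpos, h0⟩, hE⟩ := hlam
    have hsub : (Finset.range (k+2)).image (fun l => j - l) ⊆ Finset.image lam Finset.univ := by
      intro x hx
      simp only [Finset.mem_image, Finset.mem_range, Finset.mem_univ, true_and] at hx ⊢
      obtain ⟨l, hl, rfl⟩ := hx
      rcases Nat.eq_zero_or_pos l with rfl | hlpos
      · exact ⟨⟨0, by omega⟩, by simpa using h0⟩
      · obtain ⟨u, hu⟩ := hE l hlpos (by omega)
        exact ⟨u, hu⟩
    have h1 : ((Finset.range (k+2)).image (fun l => j - l)).card = k+2 := by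
      rw [Finset.card_image_of_injOn, Finset.card_range]
      intro x hx y hy hxy
      simp only [Finset.coe_range, Set.mem_Iio] at hx hy
      have hxy' : j - x = j - y := hxy
      omega
    have h2 := Finset.card_le_card hsub
    have h3 : (Finset.image lam Finset.univ).card ≤ k+1 :=
      le_trans Finset.card_image_le (by simp)
    omega
  rw [P, hempty, Finset.sum_empty]

lemma P_staircase {R : Type*} [CommRing R] (a b : ℕ → R) (j k : ℕ) (hj : k + 1 ≤ j) :
    P a b j (k+1) k = 1 := by
  have hsingle : PartSet j (k+1) k = {fun u : Fin (k+1) => j - u.1} := by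
    apply Finset.eq_singleton_iff_unique_mem.mpr
    constructor
    · rw [mem_PartSet]
      refine ⟨fun u => ⟨by omega, by omega⟩, ?_, ⟨by omega, by simp⟩, ?_⟩
      · intro u v huv
        have : u.1 ≤ v.1 := huv
        omega
      · intro l hl1 hlk
        exact ⟨⟨l, by omega⟩, rfl⟩
    · intro lam hlam
      rw [mem_PartSet] at hlam
      obtain ⟨hB, hD, ⟨hpos, h0⟩, hE⟩ := hlam
      have hsub : (Finset.range (k+1)).image (fun l => j - l) ⊆ Finset.image lam Finset.univ := by
        intro x hx
        simp only [Finset.mem_image, Finset.mem_range, Finset.mem_univ, true_and] at hx ⊢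
        obtain ⟨l, hl, rfl⟩ := hx
        rcases Nat.eq_zero_or_pos l with rfl | hlpos
        · exact ⟨⟨0, by omega⟩, by simpa using h0⟩
        · obtain ⟨u, hu⟩ := hE l hlpos (by omega)
          exact ⟨u, hu⟩
      have h1 : ((Finset.range (k+1)).image (fun l => j - l)).card = k+1 := by
        rw [Finset.card_image_of_injOn, Finset.card_range]
        intro x hx y hy hxy
        simp only [Finset.coe_range, Set.mem_Iio] at hx hy
        have hxy' : j - x = j - y := hxy
        omega
      have h3 : (Finset.image lam Finset.univ).card ≤ k+1 :=
        le_trans Finset.card_image_le (by simp)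
      have heq : Finset.image lam Finset.univ = (Finset.range (k+1)).image (fun l => j - l) :=
        (Finset.eq_of_subset_of_card_le hsub (by omega)).symm
      have hinj : Set.InjOn lam (Finset.univ : Finset (Fin (k+1))) := by
        apply Finset.injOn_of_card_image_eq
        rw [heq, h1]
        simp
      have hstrict : ∀ u v : Fin (k+1), u < v → lam v < lam u := by
        intro u v huv
        have h4 : lam v ≤ lam u := hD u v (le_of_lt huv)
        have h5 : lam u ≠ lam v := fun h => (ne_of_lt huv)
          (hinj (Finset.mem_coe.mpr (Finset.mem_univ u)) (Finset.mem_coe.mpr (Finset.mem_univ v)) h)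
        omega
      -- upper bound: lam u + u.1 ≤ j
      have hub : ∀ m (h : m < k+1), lam ⟨m, h⟩ + m ≤ j := by
        intro m
        induction m with
        | zero => intro h; have := h0; simp only [show (⟨0, hpos⟩ : Fin (k+1)) = ⟨0, h⟩ from rfl] at this; omega
        | succ m ih =>
          intro h
          have h4 := hstrict ⟨m, by omega⟩ ⟨m+1, h⟩ (Fin.mk_lt_mk.mpr (by omega))
          have := ih (by omega)
          omega
      -- value j - k appears, and position k has the min
      have hlamk : ∀ (h : k < k + 1), lam ⟨k, h⟩ = j - k := by
        intro hk1
        have hmem : j - k ∈ Finset.image lam Finset.univ := by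
          rw [heq]
          simp only [Finset.mem_image, Finset.mem_range]
          exact ⟨k, by omega, rfl⟩
        simp only [Finset.mem_image, Finset.mem_univ, true_and] at hmem
        obtain ⟨u, hu⟩ := hmem
        have h4 : lam ⟨k, hk1⟩ ≤ lam u := hD u ⟨k, hk1⟩ (by rw [Fin.le_def]; have := u.isLt; exact (by omega : u.1 ≤ k))
        have h5 : lam ⟨k, hk1⟩ ∈ Finset.image lam Finset.univ := by
          simp only [Finset.mem_image, Finset.mem_univ, true_and]
          exact ⟨_, rfl⟩
        rw [heq] at h5
        simp only [Finset.mem_image, Finset.mem_range] at h5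
        obtain ⟨l, hl, hl2⟩ := h5
        omega
      have hlb : ∀ t (h : t ≤ k) (hh : k - t < k + 1), j - k + t ≤ lam ⟨k - t, hh⟩ := by
        intro t
        induction t with
        | zero =>
          intro h hh
          rw [Nat.add_zero]
          exact le_of_eq (hlamk hh).symm
        | succ t ih =>
          intro h hh
          have h4 := hstrict ⟨k - (t+1), hh⟩ ⟨k - t, by omega⟩ (Fin.mk_lt_mk.mpr (by omega))
          have := ih (by omega) (by omega)
          omega
      funext u
      have hu := u.isLt
      have h4 : lam u + u.1 ≤ j := by
        have := hub u.1 u.2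
        rwa [Fin.eta] at this
      have h6 : lam ⟨k - (k - u.1), by omega⟩ = lam u :=
        congrArg lam (Fin.ext (by show k - (k - u.1) = u.1; omega))
      have h5 : j - k + (k - u.1) ≤ lam u :=
        le_trans (hlb (k - u.1) (by omega) (by omega)) (le_of_eq h6)
      have : lam u = j - u.1 := by omega
      simpa using this
  have hwt : wt a b (fun u : Fin (k+1) => j - u.1) = 1 := by
    rw [wt]
    have : crit (fun u : Fin (k+1) => j - u.1) = ∅ := by
      rw [Finset.eq_empty_iff_forall_notMem]
      intro u hu
      simp only [crit, Finset.mem_filter, Finset.mem_univ, true_and] at hu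
      obtain ⟨h1, h2⟩ := hu
      have := u.2
      omega
    rw [this, Finset.prod_empty]
  rw [P, hsingle, Finset.sum_singleton, hwt]
/-- The difference identity:
`P_j^i[k] − P_{j-1}^i[k] = (a_j + 1 − a_{j-k-1}) · P_j^i[k+1]`
for `k ≥ 0`, `i > k`, `j > k + 1`. -/
theorem statement5 {R : Type*} [CommRing R] (a b : ℕ → R) (j i k : ℕ)
    (hi : k < i) (hj : k + 1 < j) :
    P a b j i k - P a b (j - 1) i k =
      (a j + 1 - a (j - k - 1)) * P a b j i (k + 1) := by
  revert hi hj
  induction i generalizing b j k with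
  | zero => intro hi _; exact absurd hi (Nat.not_lt_zero k)
  | succ n IH =>
    intro hi hj
    rcases Nat.lt_or_ge k n with hkn | hkn
    · obtain ⟨m, rfl⟩ : ∃ m, n = m + 1 := ⟨n - 1, by omega⟩
      rcases Nat.eq_zero_or_pos k with rfl | hk
      · -- k = 0
        simp only [Nat.sub_zero, Nat.zero_add]
        rw [P_rec0 a b m j (by omega), P_rec0 a b m (j-1) (by omega),
            P_rec a b m j 1 le_rfl (by omega)]
        simp only [Nat.sub_self]
        have hIH := IH (fun m' => b (m'+1)) j 0 (by omega) (by omega)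
        simp only [Nat.sub_zero, Nat.zero_add] at hIH
        have hsplit : ∑ m' ∈ Finset.Icc 1 (j-1), P a (fun m' => b (m'+1)) m' (m+1) 0
            = (∑ m' ∈ Finset.Icc 1 (j-1-1), P a (fun m' => b (m'+1)) m' (m+1) 0)
              + P a (fun m' => b (m'+1)) (j-1) (m+1) 0 := by
          have e : j - 1 = (j - 1 - 1) + 1 := by omega
          conv_lhs => rw [e]
          rw [Finset.sum_Icc_succ_top (by omega), ← e]
        rw [hsplit]
        linear_combination (a j + b 1) * hIH
      · -- k ≥ 1
        rw [P_rec a b m j k hk (by omega), P_rec a b m (j-1) k hk (by omega),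
            P_rec a b m j (k+1) (by omega) (by omega)]
        simp only [Nat.add_sub_cancel]
        have IH1 := IH (fun m' => b (m'+1)) j k (by omega) (by omega)
        have IH2 := IH (fun m' => b (m'+1)) (j-1) (k-1) (by omega) (by omega)
        rw [show (j-1) - (k-1) - 1 = j - k - 1 from by omega,
            show k - 1 + 1 = k from by omega] at IH2
        linear_combination (a j + b 1) * IH1 + IH2
    · have hk : k = n := by omega
      subst hk
      rw [P_staircase a b j k (by omega), P_staircase a b (j-1) k (by omega),
          P_empty a b j k (by omega)]
      ring

end
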